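/- For every integer t ≥ 0, |P_t| ≤ r, where r is the number of maximal runs of equal characters in the BWT L of T. -/

import Mathlib

/-- 1-based access to the `i`-th character of `T`. -/
def idx (T : List ℕ) (i : ℕ) : ℕ := T.getD (i - 1) 0

/-- The suffix `T[i..n]` (1-based). -/
def sufx (T : List ℕ) (i : ℕ) : List ℕ := T.drop (i - 1)

/-- Occurrence positions of `P` in `T`: `Occ(T,P) = {i ∈ [1, n−|P|+1] : P = T[i..i+|P|−1]}`. -/
def OccF (T P : List ℕ) : Finset ℕ :=
  (Finset.Icc 1 (T.length - P.length + 1)).filter (fun i => P <+: T.drop (i - 1))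

/-- `children(P) = {Pc : c ∈ Σ, Pc is a substring of T}`. -/
def childrenSet (σ : ℕ) (T P : List ℕ) : Set (List ℕ) :=
  {Q | ∃ c ∈ Finset.Icc 1 σ, Q = P ++ [c] ∧ (P ++ [c]) <:+: T}

/-- Starting positions of the maximal runs of equal characters in `L[1..n]`. -/
def SstartSet (n : ℕ) (L : ℕ → ℕ) : Finset ℕ :=
  (Finset.Icc 1 n).filter (fun i => i = 1 ∨ L i ≠ L (i - 1))

/-- `rank(S, i) = |{j ∈ S : j ≤ i}|`. -/
def rankOf (S : Finset ℕ) (i : ℕ) : ℕ := (S.filter (fun j => j ≤ i)).card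

/-- `(c, p, q)` is an answer of the range distinct query `RD(S, b, e)`:
`c` occurs in `S[b..e]`, and `p`, `q` are the first and last occurrences of `c` in `[b,e]`. -/
def RDmem (S : ℕ → ℕ) (b e c p q : ℕ) : Prop :=
  p ∈ Finset.Icc b e ∧ S p = c ∧ (∀ i ∈ Finset.Icc b e, S i = c → p ≤ i) ∧
  q ∈ Finset.Icc b e ∧ S q = c ∧ (∀ i ∈ Finset.Icc b e, S i = c → i ≤ q)

/-- `[b,e]` is the suffix-tree interval of `P`: the positions `i ∈ [1,n]` whose suffix
`T[SA[i]..n]` has `P` as a prefix are exactly `{b,…,e}`. -/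
def isIntervalOf (n : ℕ) (T : List ℕ) (SA : ℕ → ℕ) (P : List ℕ) (b e : ℕ) : Prop :=
  1 ≤ b ∧ e ≤ n ∧ ∀ i ∈ Finset.Icc 1 n, (P <+: sufx T (SA i) ↔ i ∈ Finset.Icc b e)

/-- Length of the longest common prefix of two lists. -/
def lcpLen : List ℕ → List ℕ → ℕ
  | a :: as, b :: bs => if a = b then lcpLen as bs + 1 else 0
  | _, _ => 0

/-- `𝓛_t`: substrings of `T` of length `t` whose suffix-tree node is explicit. -/
def LsetD (σ t : ℕ) (T : List ℕ) : Set (List ℕ) :=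
  {P | P <:+: T ∧ P.length = t ∧ 2 ≤ (childrenSet σ T P).ncard}

/-- `K_t = ⋃_{P ∈ 𝓛_t} children(P)`. -/
def KsetD (σ t : ℕ) (T : List ℕ) : Set (List ℕ) :=
  {Q | ∃ P ∈ LsetD σ t T, Q ∈ childrenSet σ T P}

/-- `K'_t`: members of `K_t` that are not the last child of their parent, i.e. whose
interval has a right endpoint different from that of the parent's interval. -/
def KpsetD (σ n t : ℕ) (T : List ℕ) (SA : ℕ → ℕ) : Set (List ℕ) :=
  {Q | ∃ P ∈ LsetD σ t T, Q ∈ childrenSet σ T P ∧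
    ∃ b e b' e' : ℕ, isIntervalOf n T SA P b e ∧ isIntervalOf n T SA Q b' e' ∧ e' ≠ e}



private lemma lex_cons_iff' {c d : ℕ} {u v : List ℕ} :
    List.Lex (· < ·) (c :: u) (d :: v) ↔ c < d ∨ (c = d ∧ List.Lex (· < ·) u v) := by
  constructor
  · intro h
    cases h with
    | rel h => exact Or.inl h
    | cons h => exact Or.inr ⟨rfl, h⟩
  · rintro (h | ⟨rfl, h⟩)
    · exact List.Lex.rel h
    · exact List.Lex.cons h

private lemma not_lex_nil' (l : List ℕ) : ¬ List.Lex (· < ·) l [] := fun h => by cases h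

private lemma lcpLen_le_left' : ∀ u v : List ℕ, lcpLen u v ≤ u.length
  | [], _ => by simp [lcpLen]
  | _ :: _, [] => by simp [lcpLen]
  | a :: as, b :: bs => by
    by_cases h : a = b
    · simpa [lcpLen, h] using lcpLen_le_left' as bs
    · simp [lcpLen, h]

private lemma lcpLen_cons' (c : ℕ) (u v : List ℕ) :
    lcpLen (c :: u) (c :: v) = lcpLen u v + 1 := by simp [lcpLen]

theorem stmt9
    (σ n : ℕ) (T : List ℕ)
    (hn : 2 ≤ n) (hlen : T.length = n)
    (halpha : ∀ c ∈ T, c ∈ Finset.Icc 1 σ)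
    (hocc : ∀ c ∈ Finset.Icc 1 σ, c ∈ T)
    (hdollar : ∀ i ∈ Finset.Icc 1 (n - 1), idx T i ≠ idx T n)
    (SA : ℕ → ℕ)
    (hSA_mem : ∀ i ∈ Finset.Icc 1 n, SA i ∈ Finset.Icc 1 n)
    (hSA_surj : ∀ j ∈ Finset.Icc 1 n, ∃ i ∈ Finset.Icc 1 n, SA i = j)
    (hSA_sorted : ∀ i j, i ∈ Finset.Icc 1 n → j ∈ Finset.Icc 1 n → i < j →
      List.Lex (· < ·) (sufx T (SA i)) (sufx T (SA j)))
    (LF : ℕ → ℕ)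
    (hLF_mem : ∀ i ∈ Finset.Icc 1 n, LF i ∈ Finset.Icc 1 n)
    (hLF : ∀ i ∈ Finset.Icc 1 n, SA i ≠ 1 → SA (LF i) = SA i - 1)
    (hLF1 : ∀ i ∈ Finset.Icc 1 n, SA i = 1 → SA (LF i) = n)
    (L : ℕ → ℕ)
    (hL : ∀ i ∈ Finset.Icc 1 n, L i = idx T (SA (LF i)))
    (LCP : ℕ → ℕ)
    (hLCP1 : LCP 1 = 0)
    (hLCP : ∀ i ∈ Finset.Icc 2 n, LCP i = lcpLen (sufx T (SA (i - 1))) (sufx T (SA i)))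
 :
    ∀ t : ℕ, ((Finset.Icc 2 n).filter (fun i => LCP i = t)).card ≤ (SstartSet n L).card := by
  -- abbreviations
  classical
  have hirr : ∀ l : List ℕ, ¬ List.Lex (· < ·) l l := fun l h => asymm h h
  have hreflect : ∀ i j, i ∈ Finset.Icc 1 n → j ∈ Finset.Icc 1 n →
      List.Lex (· < ·) (sufx T (SA i)) (sufx T (SA j)) → i < j := by
    intro i j hi hj h
    rcases lt_trichotomy i j with h' | h' | h'
    · exact h'
    · subst h'; exact absurd h (hirr _)
    · exact absurd (hSA_sorted j i hj hi h') fun h2 => asymm h h2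
  have hSAinj : ∀ i ∈ Finset.Icc 1 n, ∀ j ∈ Finset.Icc 1 n, SA i = SA j → i = j := by
    intro i hi j hj hij
    rcases lt_trichotomy i j with h' | h' | h'
    · have h2 := hSA_sorted i j hi hj h'; rw [hij] at h2; exact absurd h2 (hirr _)
    · exact h'
    · have h2 := hSA_sorted j i hj hi h'; rw [hij] at h2; exact absurd h2 (hirr _)
  have hsufx_cons : ∀ j, 1 ≤ j → j ≤ n → sufx T j = idx T j :: sufx T (j + 1) := by
    intro j h1 h2
    have hlt : j - 1 < T.length := by rw [hlen]; omega
    unfold sufx idx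
    rw [List.getD_eq_getElem _ _ hlt]
    have he : j + 1 - 1 = (j - 1) + 1 := by omega
    rw [he, List.getElem_cons_drop]
  have hLF_cons : ∀ i ∈ Finset.Icc 1 n, SA i ≠ 1 →
      L i = idx T (SA i - 1) ∧ sufx T (SA (LF i)) = L i :: sufx T (SA i) := by
    intro i hi h1
    have hSAi := hSA_mem i hi
    rw [Finset.mem_Icc] at hSAi
    have hS : SA (LF i) = SA i - 1 := hLF i hi h1
    have hLi : L i = idx T (SA i - 1) := by rw [hL i hi, hS]
    have h2 : SA i - 1 + 1 = SA i := by omega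
    refine ⟨hLi, ?_⟩
    rw [hS, hsufx_cons (SA i - 1) (by omega) (by omega), h2, hLi]
  have hmem12 : ∀ i ∈ Finset.Icc 2 n, i ∈ Finset.Icc 1 n ∧ i - 1 ∈ Finset.Icc 1 n ∧ 2 ≤ i ∧ i ≤ n := by
    intro i hi
    rw [Finset.mem_Icc] at hi
    refine ⟨?_, ?_, hi.1, hi.2⟩ <;> rw [Finset.mem_Icc] <;> omega
  have hno1 : ∀ i ∈ Finset.Icc 2 n, L i = L (i - 1) → SA i ≠ 1 ∧ SA (i - 1) ≠ 1 := by
    intro i hi hLeq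
    obtain ⟨hi1, hi1', hi2, hin⟩ := hmem12 i hi
    have hine : i - 1 ≠ i := by omega
    constructor
    · intro h1
      have hSm := hSA_mem (i - 1) hi1'
      rw [Finset.mem_Icc] at hSm
      have h1' : SA (i - 1) ≠ 1 := fun h =>
        hine (hSAinj (i - 1) hi1' i hi1 (h.trans h1.symm))
      have hA : L (i - 1) = idx T (SA (i - 1) - 1) := (hLF_cons (i - 1) hi1' h1').1
      have hd : idx T (SA (i - 1) - 1) ≠ idx T n :=
        hdollar _ (by rw [Finset.mem_Icc]; omega)
      have hB : L i = idx T n := by rw [hL i hi1, hLF1 i hi1 h1]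
      exact hd (by rw [← hA, ← hLeq, hB])
    · intro h1
      have hSm := hSA_mem i hi1
      rw [Finset.mem_Icc] at hSm
      have h1' : SA i ≠ 1 := fun h =>
        hine (hSAinj (i - 1) hi1' i hi1 (h1.trans h.symm))
      have hA : L i = idx T (SA i - 1) := (hLF_cons i hi1 h1').1
      have hd : idx T (SA i - 1) ≠ idx T n :=
        hdollar _ (by rw [Finset.mem_Icc]; omega)
      have hB : L (i - 1) = idx T n := by rw [hL (i - 1) hi1', hLF1 (i - 1) hi1' h1]
      exact hd (by rw [← hA, hLeq, hB])
  -- the key step lemma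
  have hstep : ∀ i ∈ Finset.Icc 2 n, L i = L (i - 1) →
      LF (i - 1) + 1 = LF i ∧ LF i ∈ Finset.Icc 2 n ∧ LCP (LF i) = LCP i + 1 := by
    intro i hi hLeq
    obtain ⟨hi1, hi1', hi2, hin⟩ := hmem12 i hi
    obtain ⟨hne1, hne1'⟩ := hno1 i hi hLeq
    obtain ⟨hLc, hScons⟩ := hLF_cons i hi1 hne1
    obtain ⟨hLc', hScons'⟩ := hLF_cons (i - 1) hi1' hne1'
    rw [hLeq] at hScons
    set c := L (i - 1) with hc
    have hSlt : List.Lex (· < ·) (sufx T (SA (i - 1))) (sufx T (SA i)) :=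
      hSA_sorted (i - 1) i hi1' hi1 (by omega)
    have ha := hLF_mem (i - 1) hi1'
    have hb := hLF_mem i hi1
    have hab : LF (i - 1) < LF i := by
      apply hreflect _ _ ha hb
      rw [hScons, hScons']
      exact List.Lex.cons hSlt
    -- the dollar is not c
    have hSAi := hSA_mem i hi1
    rw [Finset.mem_Icc] at hSAi
    have hcd : c ≠ idx T n := by
      rw [hLeq] at hLc
      rw [hLc]
      exact hdollar _ (by rw [Finset.mem_Icc]; omega)
    -- no index strictly between LF (i-1) and LF i
    have hnob : ∀ j ∈ Finset.Icc 1 n, LF (i - 1) < j → j < LF i → False := by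
      intro j hj haj hjb
      have h1 : List.Lex (· < ·) (sufx T (SA (LF (i - 1)))) (sufx T (SA j)) :=
        hSA_sorted _ _ ha hj haj
      have h2 : List.Lex (· < ·) (sufx T (SA j)) (sufx T (SA (LF i))) :=
        hSA_sorted _ _ hj hb hjb
      rw [hScons'] at h1
      rw [hScons] at h2
      have hSAj := hSA_mem j hj
      rw [Finset.mem_Icc] at hSAj
      have hx : sufx T (SA j) = idx T (SA j) :: sufx T (SA j + 1) :=
        hsufx_cons (SA j) hSAj.1 hSAj.2
      rw [hx] at h1 h2
      rw [lex_cons_iff'] at h1 h2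
      have hdc : idx T (SA j) = c := by
        rcases h1 with h1 | ⟨h1, _⟩ <;> rcases h2 with h2 | ⟨h2, _⟩ <;> omega
      have hw1 : List.Lex (· < ·) (sufx T (SA (i - 1))) (sufx T (SA j + 1)) := by
        rcases h1 with h1 | ⟨_, h1⟩
        · omega
        · exact h1
      have hw2 : List.Lex (· < ·) (sufx T (SA j + 1)) (sufx T (SA i)) := by
        rcases h2 with h2 | ⟨_, h2⟩
        · omega
        · exact h2
      have hSAjn : SA j ≠ n := by
        intro h
        apply hcd
        rw [← hdc, h]
      obtain ⟨k, hk, hSAk⟩ := hSA_surj (SA j + 1) (by rw [Finset.mem_Icc]; omega)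
      rw [← hSAk] at hw1 hw2
      have hk1 : i - 1 < k := hreflect _ _ hi1' hk hw1
      have hk2 : k < i := hreflect _ _ hk hi1 hw2
      omega
    have hb2 : LF i ∈ Finset.Icc 2 n := by
      rw [Finset.mem_Icc] at ha hb ⊢
      omega
    have heq : LF (i - 1) + 1 = LF i := by
      by_contra h
      rw [Finset.mem_Icc] at ha hb
      exact hnob (LF (i - 1) + 1) (by rw [Finset.mem_Icc]; omega) (by omega) (by omega)
    refine ⟨heq, hb2, ?_⟩
    rw [hLCP (LF i) hb2, hLCP i hi, ← heq]
    have hred : LF (i - 1) + 1 - 1 = LF (i - 1) := by omega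
    rw [hred, hScons', heq, hScons, lcpLen_cons']
  -- LF is injective
  have hLFinj : ∀ i ∈ Finset.Icc 1 n, ∀ j ∈ Finset.Icc 1 n, LF i = LF j → i = j := by
    intro i hi j hj hij
    have hSi := hSA_mem i hi; have hSj := hSA_mem j hj
    rw [Finset.mem_Icc] at hSi hSj
    by_cases h1 : SA i = 1 <;> by_cases h2 : SA j = 1
    · exact hSAinj i hi j hj (h1.trans h2.symm)
    · have e1 := hLF1 i hi h1
      have e2 := hLF j hj h2
      rw [hij, e2] at e1
      omega
    · have e1 := hLF i hi h1
      have e2 := hLF1 j hj h2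
      rw [hij, e2] at e1
      omega
    · have e1 := hLF i hi h1
      have e2 := hLF j hj h2
      rw [hij, e2] at e1
      exact hSAinj i hi j hj (by omega)
  -- LCP values are at most n
  have hLCP_le : ∀ i ∈ Finset.Icc 2 n, LCP i ≤ n := by
    intro i hi
    obtain ⟨hi1, hi1', _, _⟩ := hmem12 i hi
    rw [hLCP i hi]
    calc lcpLen (sufx T (SA (i - 1))) (sufx T (SA i)) ≤ (sufx T (SA (i - 1))).length :=
          lcpLen_le_left' _ _
      _ ≤ T.length := by unfold sufx; exact (List.length_drop).le.trans (by simp)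
      _ = n := hlen
  -- main induction
  have main : ∀ d t, n + 1 ≤ t + d →
      ((Finset.Icc 2 n).filter (fun i => LCP i = t)).card ≤
      ((Finset.Icc 2 n).filter (fun j => L j ≠ L (j - 1) ∧ t ≤ LCP j)).card := by
    intro d
    induction d with
    | zero =>
      intro t ht
      have he : ((Finset.Icc 2 n).filter (fun i => LCP i = t)) = ∅ := by
        rw [Finset.filter_eq_empty_iff]
        intro i hi hLt
        have := hLCP_le i hi
        omega
      rw [he]
      simp
    | succ d ih =>
      intro t ht
      set A := (Finset.Icc 2 n).filter (fun i => LCP i = t) with hA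
      set R := (Finset.Icc 2 n).filter (fun j => L j ≠ L (j - 1) ∧ t ≤ LCP j) with hR
      have hsplitA := Finset.card_filter_add_card_filter_not
        (s := A) (p := fun i => L i = L (i - 1))
      have hsplitR := Finset.card_filter_add_card_filter_not
        (s := R) (p := fun j => LCP j = t)
      -- nonboundary part of A injects into P_{t+1}
      have hC : (A.filter (fun i => L i = L (i - 1))).card ≤
          ((Finset.Icc 2 n).filter (fun i => LCP i = t + 1)).card := by
        apply Finset.card_le_card_of_injOn LF
        · intro i hi
          simp only [hA, Finset.mem_coe, Finset.mem_filter] at hi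
          obtain ⟨⟨hi2, hLt⟩, hLeq⟩ := hi
          obtain ⟨_, hb2, hLCPb⟩ := hstep i hi2 hLeq
          rw [Finset.mem_coe, Finset.mem_filter]
          exact ⟨hb2, by rw [hLCPb, hLt]⟩
        · intro i hi j hj hij
          simp only [hA, Finset.mem_coe, Finset.mem_filter] at hi hj
          exact hLFinj i (hmem12 i hi.1.1).1 j (hmem12 j hj.1.1).1 hij
      have hPt1 := ih (t + 1) (by omega)
      -- boundary part of A sits inside R.filter (LCP = t)
      have hB : (A.filter (fun i => ¬ L i = L (i - 1))).card ≤
          (R.filter (fun j => LCP j = t)).card := by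
        apply Finset.card_le_card
        intro i hi
        simp only [hA, hR, Finset.mem_filter] at hi ⊢
        obtain ⟨⟨hi2, hLt⟩, hLne⟩ := hi
        exact ⟨⟨hi2, hLne, by omega⟩, hLt⟩
      -- P_{t+1}'s bound sits inside R.filter (¬ LCP = t)
      have hRt1 : ((Finset.Icc 2 n).filter (fun j => L j ≠ L (j - 1) ∧ t + 1 ≤ LCP j)).card ≤
          (R.filter (fun j => ¬ LCP j = t)).card := by
        apply Finset.card_le_card
        intro j hj
        simp only [hR, Finset.mem_filter] at hj ⊢
        obtain ⟨hj2, hLne, hLt⟩ := hj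
        exact ⟨⟨hj2, hLne, by omega⟩, by omega⟩
      omega
  intro t
  calc ((Finset.Icc 2 n).filter (fun i => LCP i = t)).card
      ≤ ((Finset.Icc 2 n).filter (fun j => L j ≠ L (j - 1) ∧ t ≤ LCP j)).card :=
        main (n + 1) t (by omega)
    _ ≤ (SstartSet n L).card := by
        apply Finset.card_le_card
        intro j hj
        simp only [Finset.mem_filter, Finset.mem_Icc] at hj
        unfold SstartSet
        rw [Finset.mem_filter, Finset.mem_Icc]
        exact ⟨⟨by omega, hj.1.2⟩, Or.inr hj.2.1⟩
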